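/- Let d ≥ 1 and let P be a nonconstant polynomial in d variables with complex coefficients, of total degree m, with principal part P_m (the homogeneous component of P of degree m). Then for every linear subspace V ⊆ ℝ^d: σ⁰_P(V) ≤ σ⁰_{P_m}(V). -/

import Mathlib

open MvPolynomial Filter Finset

noncomputable section

/-- Evaluation of a complex-coefficient polynomial at a real point. -/
def evalR {d : ℕ} (P : MvPolynomial (Fin d) ℂ) (ξ : EuclideanSpace ℝ (Fin d)) : ℂ :=
  eval (fun i => (ξ i : ℂ)) P

/-- `P̃_V(ξ,t) = sup {|P(ξ+η)| : η ∈ V, |η| ≤ t}`. -/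
def PtildeV {d : ℕ} (P : MvPolynomial (Fin d) ℂ) (V : Submodule ℝ (EuclideanSpace ℝ (Fin d)))
    (ξ : EuclideanSpace ℝ (Fin d)) (t : ℝ) : ℝ :=
  sSup {r : ℝ | ∃ η ∈ V, ‖η‖ ≤ t ∧ r = ‖evalR P (ξ + η)‖}

/-- `P̃(ξ,t) = P̃_{ℝ^d}(ξ,t)`. -/
def Ptilde {d : ℕ} (P : MvPolynomial (Fin d) ℂ) (ξ : EuclideanSpace ℝ (Fin d)) (t : ℝ) : ℝ :=
  PtildeV P ⊤ ξ t

/-- `σ⁰_P(V)`. -/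
def sigma0 {d : ℕ} (P : MvPolynomial (Fin d) ℂ) (V : Submodule ℝ (EuclideanSpace ℝ (Fin d))) : ℝ :=
  sInf {r : ℝ | ∃ t > (1:ℝ), ∃ ξ, r = PtildeV P V ξ t / Ptilde P ξ t}

/-- `σ_P(V)`. -/
def sigma {d : ℕ} (P : MvPolynomial (Fin d) ℂ) (V : Submodule ℝ (EuclideanSpace ℝ (Fin d))) : ℝ :=
  sInf {r : ℝ | ∃ t > (1:ℝ), r = liminf (fun ξ => PtildeV P V ξ t / Ptilde P ξ t)
    (Bornology.cobounded (EuclideanSpace ℝ (Fin d)))}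

/-- Multi-index partial derivative `∂^α P`. -/
def pd {d : ℕ} (α : Fin d → ℕ) (P : MvPolynomial (Fin d) ℂ) : MvPolynomial (Fin d) ℂ :=
  ((List.ofFn fun i : Fin d =>
      ((pderiv i).toLinearMap ^ α i : Module.End ℂ (MvPolynomial (Fin d) ℂ))).prod) P

/-- The finset of multi-indices `α` with `k ≤ |α| ≤ m`. -/
def midx (d m k : ℕ) : Finset (Fin d → ℕ) :=
  (Fintype.piFinset fun _ : Fin d => Finset.range (m+1)).filter fun α => k ≤ ∑ i, α i ∧ ∑ i, α i ≤ m

/-- `⟨∇P(ξ), x⟩ = Σ_j ∂_j P(ξ) x_j`. -/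
def gradPair {d : ℕ} (P : MvPolynomial (Fin d) ℂ) (ξ x : EuclideanSpace ℝ (Fin d)) : ℂ :=
  ∑ j, evalR (pderiv j P) ξ * (x j : ℂ)

/-- `|∇P(ξ)|`, the Euclidean norm of the gradient. -/
def gradNorm {d : ℕ} (P : MvPolynomial (Fin d) ℂ) (ξ : EuclideanSpace ℝ (Fin d)) : ℝ :=
  Real.sqrt (∑ j, ‖evalR (pderiv j P) ξ‖ ^ 2)

lemma continuous_evalR {d : ℕ} (Q : MvPolynomial (Fin d) ℂ) : Continuous (evalR Q) := by
  unfold evalR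
  exact (MvPolynomial.continuous_eval (p := Q)).comp
    (continuous_pi fun i => Complex.continuous_ofReal.comp
      ((EuclideanSpace.proj i : EuclideanSpace ℝ (Fin d) →L[ℝ] ℝ).continuous))

lemma mv_eq_zero_of_eval_box : ∀ {n : ℕ} (S : Fin n → Set ℝ), (∀ i, (S i).Infinite) →
    ∀ (Q : MvPolynomial (Fin n) ℂ),
    (∀ x : Fin n → ℝ, (∀ i, x i ∈ S i) → eval (fun i => (x i : ℂ)) Q = 0) → Q = 0 := by
  intro n
  induction n with
  | zero =>
      intro S hS Q h
      have h0 := h (fun i => i.elim0) (fun i => i.elim0)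
      have hQ : Q = C (eval (fun i => ((fun i : Fin 0 => i.elim0 : Fin 0 → ℝ) i : ℂ)) Q) := by
        have : Q = C (Q.coeff 0) := (MvPolynomial.eq_C_of_isEmpty Q)
        rw [this]; simp
      rw [hQ, h0, map_zero]
  | succ n ih =>
      intro S hS Q h
      have hq : finSuccEquiv ℂ n Q = 0 := by
        apply Polynomial.ext
        intro j
        rw [Polynomial.coeff_zero]
        apply ih (fun i => S i.succ) (fun i => hS _)
        intro x hx
        set px : Polynomial ℂ := (finSuccEquiv ℂ n Q).map (eval fun i => (x i : ℂ)) with hpx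
        have hroot : ∀ t ∈ S 0, px.IsRoot (t : ℂ) := by
          intro t ht
          have hcongr : (fun i : Fin (n+1) => ((Fin.cons t x : Fin (n+1) → ℝ) i : ℂ))
              = Fin.cons (t : ℂ) (fun i => (x i : ℂ)) := by
            funext i; refine Fin.cases ?_ ?_ i <;> simp
          have he : eval (Fin.cons (t : ℂ) (fun i => (x i : ℂ))) Q = 0 := by
            rw [← hcongr]
            exact h (Fin.cons t x)
              (fun i => Fin.cases (by simpa using ht) (fun j => by simpa using hx j) i)
          rw [Polynomial.IsRoot, hpx, ← eval_eq_eval_mv_eval', he]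
        have hinf : { z : ℂ | px.IsRoot z }.Infinite := by
          apply Set.Infinite.mono (s := (fun t : ℝ => (t : ℂ)) '' S 0)
          · rintro z ⟨t, ht, rfl⟩; exact hroot t ht
          · exact (hS 0).image (Complex.ofReal_injective.injOn)
        have hpx0 : px = 0 := Polynomial.eq_zero_of_infinite_isRoot _ hinf
        have := congrArg (fun p => Polynomial.coeff p j) hpx0
        simpa [hpx, Polynomial.coeff_map] using this
      have := congrArg (finSuccEquiv ℂ n).symm hq
      simpa using this

lemma exists_ne_on_ball {d : ℕ} {Q : MvPolynomial (Fin d) ℂ} (hQ : Q ≠ 0)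
    (ξ : EuclideanSpace ℝ (Fin d)) {t : ℝ} (ht : 0 < t) :
    ∃ η : EuclideanSpace ℝ (Fin d), ‖η‖ ≤ t ∧ evalR Q (ξ + η) ≠ 0 := by
  by_contra hcon
  push_neg at hcon
  apply hQ
  set δ := t / (d + 1) with hδ
  have hδ0 : 0 < δ := by positivity
  apply mv_eq_zero_of_eval_box (fun i => Set.Ioo (ξ i) (ξ i + δ))
    (fun i => Set.Ioo_infinite (by linarith))
  intro x hx
  set η : EuclideanSpace ℝ (Fin d) := WithLp.toLp 2 (fun i => x i - ξ i) with hη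
  have hbound : ∀ i, ‖η i‖ ≤ δ := by
    intro i
    have h2 := (hx i).1
    have h3 := (hx i).2
    simp only [hη, Real.norm_eq_abs]
    rw [abs_le]
    constructor <;> simp <;> linarith
  have hnorm : ‖η‖ ≤ t := by
    rw [EuclideanSpace.norm_eq]
    have h5 : δ * (d + 1) = t := by rw [hδ]; field_simp
    have h1 : ∑ i, ‖η i‖ ^ 2 ≤ t ^ 2 := by
      calc ∑ i, ‖η i‖ ^ 2 ≤ ∑ _i : Fin d, δ ^ 2 :=
            Finset.sum_le_sum fun i _ => by nlinarith [hbound i, norm_nonneg (η i)]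
        _ = d * δ ^ 2 := by simp [mul_comm]
        _ ≤ t ^ 2 := by nlinarith [sq_nonneg δ, (Nat.cast_nonneg d : (0:ℝ) ≤ d)]
    calc Real.sqrt (∑ i, ‖η i‖ ^ 2) ≤ Real.sqrt (t ^ 2) := Real.sqrt_le_sqrt h1
      _ = t := Real.sqrt_sq ht.le
  have heq : evalR Q (ξ + η) = eval (fun i => (x i : ℂ)) Q := by
    unfold evalR
    have hfun : (fun i => (((ξ + η) i : ℝ) : ℂ)) = fun i => (x i : ℂ) := by
      funext i
      have hxi : (ξ + η) i = x i := by simp [hη]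
      rw [hxi]
    rw [hfun]
  rw [← heq]
  exact hcon η hnorm


lemma ptV_bddAbove {d : ℕ} (Q : MvPolynomial (Fin d) ℂ) (V : Submodule ℝ (EuclideanSpace ℝ (Fin d)))
    (ξ : EuclideanSpace ℝ (Fin d)) (t : ℝ) :
    BddAbove {r : ℝ | ∃ η ∈ V, ‖η‖ ≤ t ∧ r = ‖evalR Q (ξ + η)‖} := by
  have hc : Continuous fun η : EuclideanSpace ℝ (Fin d) => ‖evalR Q (ξ + η)‖ :=
    continuous_norm.comp ((continuous_evalR Q).comp (continuous_const.add continuous_id))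
  have hK : IsCompact ((fun η : EuclideanSpace ℝ (Fin d) => ‖evalR Q (ξ + η)‖) ''
      Metric.closedBall 0 t) := ((isCompact_closedBall 0 t).image hc)
  apply BddAbove.mono _ hK.bddAbove
  rintro r ⟨η, -, hηn, rfl⟩
  exact ⟨η, by simpa [Metric.mem_closedBall, dist_eq_norm] using hηn, rfl⟩

lemma le_ptildeV {d : ℕ} {Q : MvPolynomial (Fin d) ℂ} {V : Submodule ℝ (EuclideanSpace ℝ (Fin d))}
    {ξ η : EuclideanSpace ℝ (Fin d)} {t : ℝ} (hη : η ∈ V) (hn : ‖η‖ ≤ t) :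
    ‖evalR Q (ξ + η)‖ ≤ PtildeV Q V ξ t :=
  le_csSup (ptV_bddAbove Q V ξ t) ⟨η, hη, hn, rfl⟩

lemma ptildeV_le {d : ℕ} {Q : MvPolynomial (Fin d) ℂ} {V : Submodule ℝ (EuclideanSpace ℝ (Fin d))}
    {ξ : EuclideanSpace ℝ (Fin d)} {t M : ℝ} (hM : 0 ≤ M)
    (h : ∀ η ∈ V, ‖η‖ ≤ t → ‖evalR Q (ξ + η)‖ ≤ M) : PtildeV Q V ξ t ≤ M := by
  apply Real.sSup_le _ hM
  rintro r ⟨η, hη, hn, rfl⟩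
  exact h η hη hn

lemma ptildeV_nonneg {d : ℕ} (Q : MvPolynomial (Fin d) ℂ) (V : Submodule ℝ (EuclideanSpace ℝ (Fin d)))
    (ξ : EuclideanSpace ℝ (Fin d)) {t : ℝ} (ht : 0 ≤ t) : 0 ≤ PtildeV Q V ξ t :=
  le_trans (norm_nonneg _) (le_ptildeV V.zero_mem (by simpa using ht))

lemma evalR_smul {d n : ℕ} {Q : MvPolynomial (Fin d) ℂ} (hQ : Q.IsHomogeneous n)
    (c : ℝ) (x : EuclideanSpace ℝ (Fin d)) :
    evalR Q (c • x) = (c : ℂ) ^ n * evalR Q x := by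
  unfold evalR
  have hfun : (fun i => (((c • x : EuclideanSpace ℝ (Fin d)) i : ℝ) : ℂ))
      = fun i => (c : ℂ) * (x i : ℂ) := by
    funext i
    have : (c • x : EuclideanSpace ℝ (Fin d)) i = c * x i := rfl
    rw [this]; push_cast; ring
  rw [hfun, eval_eq, eval_eq, Finset.mul_sum]
  refine Finset.sum_congr rfl fun s hs => ?_
  have hdeg : s.degree = n := by
    rw [Finsupp.degree_eq_weight_one]
    exact hQ (mem_support_iff.mp hs)
  have hprod : ∏ i ∈ s.support, ((c : ℂ) * (x i : ℂ)) ^ s i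
      = (c : ℂ) ^ n * ∏ i ∈ s.support, (x i : ℂ) ^ s i := by
    rw [← hdeg]
    simp_rw [mul_pow]
    rw [Finset.prod_mul_distrib, Finset.prod_pow_eq_pow_sum]
    rfl
  rw [hprod]; ring



lemma cabs_add_le' (x y : ℂ) : ‖x + y‖ ≤ ‖x‖ + ‖y‖ :=
  norm_add_le x y

lemma cabs_sub_le' (x y : ℂ) : ‖x - y‖ ≤ ‖x‖ + ‖y‖ := by
  simpa [sub_eq_add_neg] using norm_add_le x (-y)

lemma evalR_sum {d : ℕ} {ι : Type*} (s : Finset ι) (f : ι → MvPolynomial (Fin d) ℂ)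
    (x : EuclideanSpace ℝ (Fin d)) : evalR (∑ j ∈ s, f j) x = ∑ j ∈ s, evalR (f j) x := by
  unfold evalR
  exact map_sum _ _ _


set_option maxHeartbeats 1000000 in
/-- For a nonconstant polynomial `P` of total degree `m` with principal part `P_m`,
`σ⁰_P(V) ≤ σ⁰_{P_m}(V)` for every subspace `V`. -/
theorem statement7 {d m : ℕ} (hd : 1 ≤ d) (hm : 1 ≤ m) (P : MvPolynomial (Fin d) ℂ)
    (hdeg : P.totalDegree = m) (V : Submodule ℝ (EuclideanSpace ℝ (Fin d))) :
    sigma0 P V ≤ sigma0 (homogeneousComponent m P) V := by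
  obtain ⟨k, rfl⟩ : ∃ k, m = k + 1 := ⟨m - 1, (Nat.succ_pred_eq_of_pos hm).symm⟩
  -- the principal part is nonzero
  have hPne : P ≠ 0 := by
    intro h0
    rw [h0, totalDegree_zero] at hdeg
    omega
  have hPmne : homogeneousComponent (k+1) P ≠ 0 := by
    obtain ⟨s, hs, hsd⟩ : ∃ s ∈ P.support, (s.sum fun _ e => e) = k + 1 :=
      let ⟨s, hs, h2⟩ := Finset.exists_mem_eq_sup P.support
        (nonempty_iff_ne_empty.mpr fun h => hPne (support_eq_empty.mp h))
        (fun s : Fin d →₀ ℕ => s.sum fun _ e => e)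
      ⟨s, hs, by rw [← h2]; exact hdeg⟩
    intro h0
    have hc := coeff_homogeneousComponent (n := k+1) s (φ := P)
    rw [h0] at hc
    simp only [coeff_zero] at hc
    have hd2 : s.degree = k + 1 := hsd
    rw [if_pos hd2] at hc
    exact (mem_support_iff.mp hs) hc.symm
  -- decomposition of evaluations at scaled points
  have hPsum : P = ∑ j ∈ Finset.range (k + 2), homogeneousComponent j P := by
    conv_lhs => rw [← sum_homogeneousComponent P]
    rw [hdeg]
  have hdecomp : ∀ (lam : ℝ) (x : EuclideanSpace ℝ (Fin d)),
      evalR P (lam • x)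
        = ∑ j ∈ Finset.range (k + 2), (lam : ℂ) ^ j * evalR (homogeneousComponent j P) x := by
    intro lam x
    conv_lhs => rw [hPsum, evalR_sum]
    exact Finset.sum_congr rfl fun j _ =>
      evalR_smul (homogeneousComponent_isHomogeneous j P) lam x
  -- reduce to an epsilon estimate
  refine le_of_forall_pos_le_add fun ε hε => ?_
  have hlb : ∀ (Q : MvPolynomial (Fin d) ℂ) (r : ℝ),
      r ∈ {r : ℝ | ∃ t > (1:ℝ), ∃ ξ, r = PtildeV Q V ξ t / Ptilde Q ξ t} → 0 ≤ r := by
    rintro Q r ⟨t, ht, ξ, rfl⟩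
    have ht0 : (0:ℝ) ≤ t := by linarith
    exact div_nonneg (ptildeV_nonneg _ _ _ ht0) (ptildeV_nonneg _ _ _ ht0)
  have hsig : sigma0 (homogeneousComponent (k+1) P) V
      = sInf {r : ℝ | ∃ t > (1:ℝ), ∃ ξ,
          r = PtildeV (homogeneousComponent (k+1) P) V ξ t
            / Ptilde (homogeneousComponent (k+1) P) ξ t} := rfl
  have hSne : {r : ℝ | ∃ t > (1:ℝ), ∃ ξ,
      r = PtildeV (homogeneousComponent (k+1) P) V ξ t
        / Ptilde (homogeneousComponent (k+1) P) ξ t}.Nonempty := ⟨_, 2, one_lt_two, 0, rfl⟩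
  have hεhalf : (0:ℝ) < ε / 2 := by linarith
  obtain ⟨r, hrS, hrlt⟩ := exists_lt_of_csInf_lt hSne
    (lt_add_of_pos_right _ hεhalf)
  obtain ⟨t₀, ht₀, ξ₀, hr⟩ := hrS
  have ht₀0 : (0:ℝ) < t₀ := lt_trans one_pos ht₀
  set a := PtildeV (homogeneousComponent (k+1) P) V ξ₀ t₀ with ha_def
  set b := Ptilde (homogeneousComponent (k+1) P) ξ₀ t₀ with hb_def
  have ha : 0 ≤ a := ptildeV_nonneg _ _ _ ht₀0.le
  have hb : 0 < b := by
    obtain ⟨η, hηn, hne⟩ := exists_ne_on_ball hPmne ξ₀ ht₀0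
    calc (0:ℝ) < ‖evalR (homogeneousComponent (k+1) P) (ξ₀ + η)‖ :=
          norm_pos_iff.mpr hne
      _ ≤ b := le_ptildeV Submodule.mem_top hηn
  -- uniform bound for lower-order terms on the ball K
  set g : EuclideanSpace ℝ (Fin d) → ℝ :=
    fun x => ∑ j ∈ Finset.range (k+1), ‖evalR (homogeneousComponent j P) x‖ with hg
  have hgc : Continuous g :=
    continuous_finset_sum _ fun j _ => continuous_norm.comp (continuous_evalR _)
  have hgnn : ∀ x, 0 ≤ g x := fun x =>
    Finset.sum_nonneg fun j _ => norm_nonneg _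
  set K := Metric.closedBall ξ₀ t₀ with hK
  have hKc : IsCompact K := isCompact_closedBall _ _
  set M := sSup (g '' K) with hM
  have hgM : ∀ x ∈ K, g x ≤ M := fun x hx =>
    le_csSup ((hKc.image hgc).bddAbove) ⟨x, hx, rfl⟩
  have hM0 : 0 ≤ M :=
    le_trans (hgnn ξ₀) (hgM ξ₀ (Metric.mem_closedBall_self ht₀0.le))
  -- the key pointwise estimate
  have key : ∀ (lam : ℝ), 1 ≤ lam → ∀ x ∈ K,
      ‖evalR P (lam • x)
        - (lam : ℂ) ^ (k+1) * evalR (homogeneousComponent (k+1) P) x‖ ≤ lam ^ k * M := by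
    intro lam hlam x hx
    have hlam0 : (0:ℝ) < lam := lt_of_lt_of_le one_pos hlam
    rw [hdecomp lam x, Finset.sum_range_succ, add_sub_cancel_right]
    calc ‖∑ j ∈ Finset.range (k+1),
          (lam : ℂ) ^ j * evalR (homogeneousComponent j P) x‖
        ≤ ∑ j ∈ Finset.range (k+1),
            ‖(lam : ℂ) ^ j * evalR (homogeneousComponent j P) x‖ :=
          norm_sum_le _ _
      _ ≤ ∑ j ∈ Finset.range (k+1),
            lam ^ k * ‖evalR (homogeneousComponent j P) x‖ := by
          apply Finset.sum_le_sum
          intro j hj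
          rw [norm_mul, norm_pow, Complex.norm_real, Real.norm_eq_abs, abs_of_pos hlam0]
          exact mul_le_mul_of_nonneg_right
            (pow_le_pow_right₀ hlam (Nat.lt_succ_iff.mp (Finset.mem_range.mp hj)))
            (norm_nonneg _)
      _ = lam ^ k * g x := by rw [hg, Finset.mul_sum]
      _ ≤ lam ^ k * M := mul_le_mul_of_nonneg_left (hgM x hx) (by positivity)
  -- claim A : upper bound for the numerator
  have claimA : ∀ (lam : ℝ), 1 ≤ lam →
      PtildeV P V (lam • ξ₀) (lam * t₀) ≤ lam ^ k * (lam * a + M) := by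
    intro lam hlam
    have hlam0 : (0:ℝ) < lam := lt_of_lt_of_le one_pos hlam
    apply ptildeV_le (by positivity)
    intro η hη hηn
    set η' : EuclideanSpace ℝ (Fin d) := lam⁻¹ • η with hη'
    have hη'V : η' ∈ V := V.smul_mem _ hη
    have hη'n : ‖η'‖ ≤ t₀ := by
      rw [hη', norm_smul, Real.norm_eq_abs, abs_of_pos (inv_pos.mpr hlam0),
        inv_mul_le_iff₀ hlam0]
      exact hηn
    have hxK : ξ₀ + η' ∈ K := by
      rw [hK, Metric.mem_closedBall, dist_eq_norm, add_sub_cancel_left]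
      exact hη'n
    have hrepr : lam • ξ₀ + η = lam • (ξ₀ + η') := by
      rw [smul_add, hη', smul_smul, mul_inv_cancel₀ hlam0.ne', one_smul]
    have hkey := key lam hlam _ hxK
    have habsPm : ‖evalR (homogeneousComponent (k+1) P) (ξ₀ + η')‖ ≤ a :=
      le_ptildeV hη'V hη'n
    have habs : ‖evalR P (lam • ξ₀ + η)‖
        ≤ lam ^ (k+1) * ‖evalR (homogeneousComponent (k+1) P) (ξ₀ + η')‖
          + lam ^ k * M := by
      rw [hrepr]
      have hsplit : evalR P (lam • (ξ₀ + η'))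
          = ((lam : ℂ) ^ (k+1) * evalR (homogeneousComponent (k+1) P) (ξ₀ + η'))
            + (evalR P (lam • (ξ₀ + η'))
              - (lam : ℂ) ^ (k+1) * evalR (homogeneousComponent (k+1) P) (ξ₀ + η')) := by
        ring
      calc ‖evalR P (lam • (ξ₀ + η'))‖
          ≤ ‖(lam : ℂ) ^ (k+1) * evalR (homogeneousComponent (k+1) P) (ξ₀ + η')‖
            + ‖evalR P (lam • (ξ₀ + η'))
              - (lam : ℂ) ^ (k+1) * evalR (homogeneousComponent (k+1) P) (ξ₀ + η')‖ := by
            conv_lhs => rw [hsplit]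
            exact cabs_add_le' _ _
        _ ≤ lam ^ (k+1) * ‖evalR (homogeneousComponent (k+1) P) (ξ₀ + η')‖
            + lam ^ k * M := by
            rw [norm_mul, norm_pow, Complex.norm_real, Real.norm_eq_abs, abs_of_pos hlam0]
            exact add_le_add_right hkey _
    have hmul : lam ^ (k+1) * ‖evalR (homogeneousComponent (k+1) P) (ξ₀ + η')‖
        ≤ lam ^ (k+1) * a := mul_le_mul_of_nonneg_left habsPm (by positivity)
    have hpow : lam ^ (k+1) = lam ^ k * lam := pow_succ lam k
    nlinarith [habs, hmul]
  -- claim B : lower bound for the denominator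
  have claimB : ∀ (lam : ℝ), 1 ≤ lam →
      lam ^ k * (lam * b - M) ≤ Ptilde P (lam • ξ₀) (lam * t₀) := by
    intro lam hlam
    have hlam0 : (0:ℝ) < lam := lt_of_lt_of_le one_pos hlam
    have hB0 : 0 ≤ Ptilde P (lam • ξ₀) (lam * t₀) :=
      ptildeV_nonneg _ _ _ (by positivity)
    have hble : b ≤ (Ptilde P (lam • ξ₀) (lam * t₀) + lam ^ k * M) / lam ^ (k+1) := by
      rw [hb_def]
      apply ptildeV_le (by positivity)
      intro η _ hηn
      rw [le_div_iff₀ (by positivity)]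
      have hxK : ξ₀ + η ∈ K := by
        rw [hK, Metric.mem_closedBall, dist_eq_norm, add_sub_cancel_left]
        exact hηn
      have hkey := key lam hlam _ hxK
      have hmemB : ‖evalR P (lam • ξ₀ + lam • η)‖
          ≤ Ptilde P (lam • ξ₀) (lam * t₀) := by
        apply le_ptildeV Submodule.mem_top
        rw [norm_smul, Real.norm_eq_abs, abs_of_pos hlam0]
        exact mul_le_mul_of_nonneg_left hηn hlam0.le
      have hrepr : lam • (ξ₀ + η) = lam • ξ₀ + lam • η := smul_add _ _ _
      have hsplit : (lam : ℂ) ^ (k+1) * evalR (homogeneousComponent (k+1) P) (ξ₀ + η)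
          = evalR P (lam • (ξ₀ + η))
            - (evalR P (lam • (ξ₀ + η))
              - (lam : ℂ) ^ (k+1) * evalR (homogeneousComponent (k+1) P) (ξ₀ + η)) := by
        ring
      have h8 : lam ^ (k+1) * ‖evalR (homogeneousComponent (k+1) P) (ξ₀ + η)‖
          ≤ Ptilde P (lam • ξ₀) (lam * t₀) + lam ^ k * M := by
        calc lam ^ (k+1) * ‖evalR (homogeneousComponent (k+1) P) (ξ₀ + η)‖
            = ‖(lam : ℂ) ^ (k+1)
                * evalR (homogeneousComponent (k+1) P) (ξ₀ + η)‖ := by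
              rw [norm_mul, norm_pow, Complex.norm_real, Real.norm_eq_abs, abs_of_pos hlam0]
          _ ≤ ‖evalR P (lam • (ξ₀ + η))‖
              + ‖evalR P (lam • (ξ₀ + η))
                - (lam : ℂ) ^ (k+1) * evalR (homogeneousComponent (k+1) P) (ξ₀ + η)‖ := by
              conv_lhs => rw [hsplit]
              exact cabs_sub_le' _ _
          _ ≤ Ptilde P (lam • ξ₀) (lam * t₀) + lam ^ k * M := by
              rw [hrepr] at hkey ⊢
              exact add_le_add hmemB hkey
      linarith [h8]
    rw [le_div_iff₀ (by positivity : (0:ℝ) < lam ^ (k+1))] at hble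
    have hpow : lam ^ (k+1) = lam ^ k * lam := pow_succ lam k
    nlinarith [hble]
  -- choose lam large
  have hbtop : Tendsto (fun lam : ℝ => lam * b - M) atTop atTop := by
    apply tendsto_atTop_add_const_right
    exact tendsto_id.atTop_mul_const hb
  have h2ev : ∀ᶠ lam in atTop, (0:ℝ) < lam * b - M := hbtop.eventually_gt_atTop 0
  have htend : Tendsto (fun lam : ℝ => (lam * a + M) / (lam * b - M)) atTop (nhds (a / b)) := by
    have h1 : Tendsto (fun lam : ℝ => (a + M * lam⁻¹) / (b - M * lam⁻¹)) atTop
        (nhds ((a + M * 0) / (b - M * 0))) := by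
      apply Tendsto.div
      · exact tendsto_const_nhds.add (tendsto_const_nhds.mul tendsto_inv_atTop_zero)
      · exact tendsto_const_nhds.sub (tendsto_const_nhds.mul tendsto_inv_atTop_zero)
      · simpa using hb.ne'
    have h2 : (a + M * 0) / (b - M * 0) = a / b := by norm_num
    rw [h2] at h1
    apply h1.congr'
    filter_upwards [eventually_gt_atTop (0:ℝ), h2ev] with lam hlam hden
    have hlamne : lam ≠ 0 := hlam.ne'
    have hdenne : b - M * lam⁻¹ ≠ 0 := by
      have : b - M * lam⁻¹ = (lam * b - M) / lam := by field_simp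
      rw [this]
      positivity
    rw [div_eq_div_iff hdenne (by linarith : lam * b - M ≠ 0)]
    field_simp
  have hevlt : ∀ᶠ lam in atTop, (lam * a + M) / (lam * b - M) < a / b + ε / 2 :=
    htend.eventually_lt_const (by linarith)
  obtain ⟨lam, hlamlt, hlamden, hlam1⟩ :=
    (hevlt.and (h2ev.and (eventually_ge_atTop (1:ℝ)))).exists
  have hlam0 : (0:ℝ) < lam := lt_of_lt_of_le one_pos hlam1
  have hA := claimA lam hlam1
  have hBge := claimB lam hlam1
  have hNnn : (0:ℝ) ≤ lam ^ k * (lam * a + M) :=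
    mul_nonneg (by positivity) (by nlinarith)
  have hDpos : (0:ℝ) < lam ^ k * (lam * b - M) :=
    mul_pos (by positivity) hlamden
  have hBpos : 0 < Ptilde P (lam • ξ₀) (lam * t₀) := lt_of_lt_of_le hDpos hBge
  have hfrac : PtildeV P V (lam • ξ₀) (lam * t₀) / Ptilde P (lam • ξ₀) (lam * t₀)
      ≤ (lam * a + M) / (lam * b - M) := by
    calc PtildeV P V (lam • ξ₀) (lam * t₀) / Ptilde P (lam • ξ₀) (lam * t₀)
        ≤ (lam ^ k * (lam * a + M)) / (lam ^ k * (lam * b - M)) :=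
          div_le_div₀ hNnn hA hDpos hBge
      _ = (lam * a + M) / (lam * b - M) := mul_div_mul_left _ _ (by positivity)
  have hfin : sigma0 P V
      ≤ PtildeV P V (lam • ξ₀) (lam * t₀) / Ptilde P (lam • ξ₀) (lam * t₀) := by
    have hmem : PtildeV P V (lam • ξ₀) (lam * t₀) / Ptilde P (lam • ξ₀) (lam * t₀)
        ∈ {r : ℝ | ∃ t > (1:ℝ), ∃ ξ, r = PtildeV P V ξ t / Ptilde P ξ t} :=
      ⟨lam * t₀, lt_of_lt_of_le ht₀ (le_mul_of_one_le_left ht₀0.le hlam1), lam • ξ₀, rfl⟩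
    exact csInf_le ⟨0, fun r hr => hlb P r hr⟩ hmem
  rw [hsig]
  have hr' : r = a / b := hr
  linarith [hfin, hfrac, hlamlt, hrlt]
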